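/- Let 𝒟 = {(i,0,2) : i = 0,1,2} ∪ {(i,j,0) : i ∈ {0,2}, j ∈ {0,1,2}} ∪ {(0,2,1)} ⊆ {0,1,2}³, and let E₄ ⊆ ℝ³ be the unique nonempty compact set with E₄ = ⋃_{d∈𝒟}(E₄+d)/3. Let K ⊆ ℝ be the unique nonempty compact set with K = (K/3) ∪ ((K+2)/3) (the middle-thirds Cantor set). Then: (1) the image of E₄ under the projection (x,y,z) ↦ z equals [0,1]; (2) E₄ ∩ (ℝ² × {1}) = [0,1] × {0} × {1}; (3) E₄ ∩ (ℝ² × {0}) = K × [0,1] × {0}. -/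

import Mathlib

open Metric EMetric Set

private lemma attractor_unique {X : Type*} [MetricSpace X] {ι : Type*} [Fintype ι]
    (f : ι → X → X) (hf : ∀ i x y, dist (f i x) (f i y) ≤ (1/2) * dist x y)
    {S T : Set X} (hSne : S.Nonempty) (hSc : IsCompact S)
    (hTne : T.Nonempty) (hTc : IsCompact T)
    (hS : S = ⋃ i, f i '' S) (hT : T = ⋃ i, f i '' T) : S = T := by
  have hfin : hausdorffEdist S T ≠ ⊤ :=
    hausdorffEdist_ne_top_of_nonempty_of_bounded hSne hTne hSc.isBounded hTc.isBounded
  have hfin' : hausdorffEdist T S ≠ ⊤ := by rw [hausdorffEdist] at hfin ⊢; rwa [hausdorffEDist_comm]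
  have key : ∀ (A B : Set X), A.Nonempty → IsCompact B → B.Nonempty →
      A = (⋃ i, f i '' A) → B = (⋃ i, f i '' B) → hausdorffEdist A B ≠ ⊤ →
      ∀ x ∈ A, infDist x B ≤ (1/2) * hausdorffDist A B := by
    intro A B hAne hBc hBne hA hB hfinAB x hx
    rw [hA] at hx
    obtain ⟨i, y, hy, rfl⟩ := by simpa using hx
    obtain ⟨t, ht, htd⟩ := hBc.exists_infDist_eq_dist hBne y
    have h1 : dist y t ≤ hausdorffDist A B := by
      rw [← htd]; exact infDist_le_hausdorffDist_of_mem hy hfinAB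
    have h2 : f i t ∈ B := by
      rw [hB]; exact mem_iUnion.2 ⟨i, mem_image_of_mem _ ht⟩
    calc infDist (f i y) B ≤ dist (f i y) (f i t) := infDist_le_dist_of_mem h2
      _ ≤ (1/2) * dist y t := hf i y t
      _ ≤ (1/2) * hausdorffDist A B := by linarith
  have h0 : 0 ≤ hausdorffDist S T := hausdorffDist_nonneg
  have hle : hausdorffDist S T ≤ (1/2) * hausdorffDist S T := by
    apply hausdorffDist_le_of_infDist (by linarith)
    · exact key S T hSne hTc hTne hS hT hfin
    · intro x hx
      rw [hausdorffDist_comm]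
      exact key T S hTne hSc hSne hT hS hfin' x hx
  have hz : hausdorffDist S T = 0 := by linarith
  have : hausdorffEdist S T = 0 := by
    rw [hausdorffDist] at hz
    exact (ENNReal.toReal_eq_zero_iff _).1 hz |>.resolve_right hfin
  exact hausdorffEdist_zero_iff_eq_of_closed hSc.isClosed hTc.isClosed |>.1 this

private lemma attractor_unique3 {X : Type*} [MetricSpace X]
    (f0 f1 f2 : X → X)
    (h0 : ∀ x y, dist (f0 x) (f0 y) ≤ (1/2) * dist x y)
    (h1 : ∀ x y, dist (f1 x) (f1 y) ≤ (1/2) * dist x y)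
    (h2 : ∀ x y, dist (f2 x) (f2 y) ≤ (1/2) * dist x y)
    {S T : Set X} (hSne : S.Nonempty) (hSc : IsCompact S)
    (hTne : T.Nonempty) (hTc : IsCompact T)
    (hS : S = f0 '' S ∪ f1 '' S ∪ f2 '' S)
    (hT : T = f0 '' T ∪ f1 '' T ∪ f2 '' T) : S = T := by
  have hU : ∀ A : Set X, (⋃ i : Fin 3, ![f0, f1, f2] i '' A)
      = f0 '' A ∪ f1 '' A ∪ f2 '' A := by
    intro A; ext x
    simp only [mem_iUnion, Fin.exists_fin_succ, mem_union, Matrix.cons_val_zero,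
      Matrix.cons_val_succ]
    simp only [IsEmpty.exists_iff, exists_false, or_false]
    tauto
  exact attractor_unique ![f0, f1, f2] (by intro i; fin_cases i <;> simp only [Matrix.cons_val_zero, Matrix.cons_val_one, Matrix.head_cons, Matrix.cons_val_succ] <;> first | exact h0 | exact h1 | exact h2 | exact h3 | exact h4 | exact h5)
    hSne hSc hTne hTc (by rw [hU]; exact hS) (by rw [hU]; exact hT)

private lemma attractor_unique6 {X : Type*} [MetricSpace X]
    (f0 f1 f2 f3 f4 f5 : X → X)
    (h0 : ∀ x y, dist (f0 x) (f0 y) ≤ (1/2) * dist x y)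
    (h1 : ∀ x y, dist (f1 x) (f1 y) ≤ (1/2) * dist x y)
    (h2 : ∀ x y, dist (f2 x) (f2 y) ≤ (1/2) * dist x y)
    (h3 : ∀ x y, dist (f3 x) (f3 y) ≤ (1/2) * dist x y)
    (h4 : ∀ x y, dist (f4 x) (f4 y) ≤ (1/2) * dist x y)
    (h5 : ∀ x y, dist (f5 x) (f5 y) ≤ (1/2) * dist x y)
    {S T : Set X} (hSne : S.Nonempty) (hSc : IsCompact S)
    (hTne : T.Nonempty) (hTc : IsCompact T)
    (hS : S = f0 '' S ∪ f1 '' S ∪ f2 '' S ∪ f3 '' S ∪ f4 '' S ∪ f5 '' S)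
    (hT : T = f0 '' T ∪ f1 '' T ∪ f2 '' T ∪ f3 '' T ∪ f4 '' T ∪ f5 '' T) : S = T := by
  have hU : ∀ A : Set X, (⋃ i : Fin 6, ![f0, f1, f2, f3, f4, f5] i '' A)
      = f0 '' A ∪ f1 '' A ∪ f2 '' A ∪ f3 '' A ∪ f4 '' A ∪ f5 '' A := by
    intro A; ext x
    simp only [mem_iUnion, Fin.exists_fin_succ, mem_union, Matrix.cons_val_zero,
      Matrix.cons_val_succ]
    simp only [IsEmpty.exists_iff, exists_false, or_false]
    tauto
  exact attractor_unique ![f0, f1, f2, f3, f4, f5] (by intro i; fin_cases i <;> simp only [Matrix.cons_val_zero, Matrix.cons_val_one, Matrix.head_cons, Matrix.cons_val_succ] <;> first | exact h0 | exact h1 | exact h2 | exact h3 | exact h4 | exact h5)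
    hSne hSc hTne hTc (by rw [hU]; exact hS) (by rw [hU]; exact hT)

private lemma Icc_third : Icc (0:ℝ) 1 = (fun x => x/3) '' Icc 0 1 ∪ (fun x => (x+1)/3) '' Icc 0 1
    ∪ (fun x => (x+2)/3) '' Icc 0 1 := by
  ext x; simp only [mem_union, mem_image, mem_Icc]
  constructor
  · rintro ⟨h0, h1⟩
    rcases le_or_gt x (1/3) with h | h
    · exact Or.inl (Or.inl ⟨3*x, ⟨by linarith, by linarith⟩, by ring⟩)
    rcases le_or_gt x (2/3) with h' | h'
    · exact Or.inl (Or.inr ⟨3*x-1, ⟨by linarith, by linarith⟩, by ring⟩)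
    · exact Or.inr ⟨3*x-2, ⟨by linarith, by linarith⟩, by ring⟩
  · rintro ((⟨y, ⟨h0, h1⟩, rfl⟩ | ⟨y, ⟨h0, h1⟩, rfl⟩) | ⟨y, ⟨h0, h1⟩, rfl⟩) <;>
      constructor <;> linarith

private lemma dist1_le {a b x1 x2 : ℝ} (h : x1 - x2 = (a - b)/3) :
    dist x1 x2 ≤ (1/2) * dist a b := by
  rw [Real.dist_eq, Real.dist_eq, h, abs_div]
  have := abs_nonneg (a - b)
  rw [abs_of_pos (by norm_num : (0:ℝ) < 3)]
  linarith

private lemma dist2_le {p q : ℝ × ℝ} {x1 y1 x2 y2 : ℝ}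
    (h1 : x1 - x2 = (p.1 - q.1)/3) (h2 : y1 - y2 = (p.2 - q.2)/3) :
    dist (x1, y1) (x2, y2) ≤ (1/2) * dist p q := by
  rw [Prod.dist_eq]
  have e1 : dist x1 x2 ≤ (1/2) * dist p.1 q.1 := dist1_le h1
  have e2 : dist y1 y2 ≤ (1/2) * dist p.2 q.2 := dist1_le h2
  rw [Prod.dist_eq]
  have l1 : dist p.1 q.1 ≤ max (dist p.1 q.1) (dist p.2 q.2) := le_max_left _ _
  have l2 : dist p.2 q.2 ≤ max (dist p.1 q.1) (dist p.2 q.2) := le_max_right _ _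
  apply max_le <;> [skip; skip] <;> simp only [] <;> linarith

set_option maxHeartbeats 2000000 in
/-- Let `𝒟 ⊆ {0,1,2}³` be the ten digits
`{(i,0,2) : i=0,1,2} ∪ {(i,j,0) : i ∈ {0,2}, j=0,1,2} ∪ {(0,2,1)}` and `E₄ ⊆ ℝ³` the
attractor `E₄ = ⋃_{d∈𝒟}(E₄+d)/3`. Let `K` be the middle-thirds Cantor set. Then
(1) the projection of `E₄` to the third coordinate is `[0,1]`;
(2) the `z = 1` section of `E₄` is `[0,1] × {0} × {1}`;
(3) the `z = 0` section of `E₄` is `K × [0,1] × {0}`. -/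
theorem fractal_cube_sections
    (E₄ : Set (ℝ × ℝ × ℝ)) (hEne : E₄.Nonempty) (hEc : IsCompact E₄)
    (hE : E₄ = ⋃ d ∈ ({(0, 0, 2), (1, 0, 2), (2, 0, 2),
        (0, 0, 0), (0, 1, 0), (0, 2, 0), (2, 0, 0), (2, 1, 0), (2, 2, 0),
        (0, 2, 1)} : Set (ℝ × ℝ × ℝ)),
      (fun x : ℝ × ℝ × ℝ => (3 : ℝ)⁻¹ • (x + d)) '' E₄)
    (K : Set ℝ) (hKne : K.Nonempty) (hKc : IsCompact K)
    (hK : K = (fun x : ℝ => x / 3) '' K ∪ (fun x : ℝ => (x + 2) / 3) '' K) :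
    (fun p : ℝ × ℝ × ℝ => p.2.2) '' E₄ = Set.Icc (0 : ℝ) 1
    ∧ E₄ ∩ (Set.univ ×ˢ Set.univ ×ˢ ({1} : Set ℝ))
        = Set.Icc (0 : ℝ) 1 ×ˢ ({0} : Set ℝ) ×ˢ ({1} : Set ℝ)
    ∧ E₄ ∩ (Set.univ ×ˢ Set.univ ×ˢ ({0} : Set ℝ))
        = K ×ˢ Set.Icc (0 : ℝ) 1 ×ˢ ({0} : Set ℝ) := by
  -- componentwise membership characterization
  have hEmem : ∀ v : ℝ × ℝ × ℝ, v ∈ E₄ ↔ ∃ p ∈ E₄,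
      ∃ d ∈ ({(0, 0, 2), (1, 0, 2), (2, 0, 2),
        (0, 0, 0), (0, 1, 0), (0, 2, 0), (2, 0, 0), (2, 1, 0), (2, 2, 0),
        (0, 2, 1)} : Set (ℝ × ℝ × ℝ)),
      v.1 = (p.1 + d.1)/3 ∧ v.2.1 = (p.2.1 + d.2.1)/3 ∧ v.2.2 = (p.2.2 + d.2.2)/3 := by
    intro v
    have hcomp : ∀ p d : ℝ × ℝ × ℝ, v = (3:ℝ)⁻¹ • (p + d) ↔
        v.1 = (p.1 + d.1)/3 ∧ v.2.1 = (p.2.1 + d.2.1)/3 ∧ v.2.2 = (p.2.2 + d.2.2)/3 := by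
      intro p d
      simp [Prod.ext_iff, Prod.smul_def, smul_eq_mul, div_eq_inv_mul, mul_comm, add_mul]
    conv_lhs => rw [hE]
    simp only [mem_iUnion, exists_prop, mem_image]
    constructor
    · rintro ⟨d, hd, p, hp, h⟩
      exact ⟨p, hp, d, hd, (hcomp p d).1 h.symm⟩
    · rintro ⟨p, hp, d, hd, h⟩
      exact ⟨d, hd, p, hp, ((hcomp p d).2 h).symm⟩
  -- Claim 1
  have hPeq : ((fun p : ℝ × ℝ × ℝ => p.2.2) '' E₄)
      = (fun x => x/3) '' ((fun p : ℝ × ℝ × ℝ => p.2.2) '' E₄)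
      ∪ (fun x => (x+1)/3) '' ((fun p : ℝ × ℝ × ℝ => p.2.2) '' E₄)
      ∪ (fun x => (x+2)/3) '' ((fun p : ℝ × ℝ × ℝ => p.2.2) '' E₄) := by
    ext z
    simp only [mem_union, mem_image]
    constructor
    · rintro ⟨v, hv, rfl⟩
      obtain ⟨p, hp, d, hd, -, -, h3⟩ := (hEmem v).1 hv
      simp only [mem_insert_iff, mem_singleton_iff] at hd
      rcases hd with rfl|rfl|rfl|rfl|rfl|rfl|rfl|rfl|rfl|rfl <;> norm_num at h3 <;>
        first
        | exact Or.inl (Or.inl ⟨p.2.2, ⟨p, hp, rfl⟩, by linarith⟩)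
        | exact Or.inl (Or.inr ⟨p.2.2, ⟨p, hp, rfl⟩, by linarith⟩)
        | exact Or.inr ⟨p.2.2, ⟨p, hp, rfl⟩, by linarith⟩
    · rintro ((⟨x, ⟨v, hv, rfl⟩, rfl⟩ | ⟨x, ⟨v, hv, rfl⟩, rfl⟩) | ⟨x, ⟨v, hv, rfl⟩, rfl⟩)
      · refine ⟨(v.1/3, v.2.1/3, v.2.2/3), ?_, rfl⟩
        exact (hEmem _).2 ⟨v, hv, (0,0,0), by simp, by norm_num⟩
      · refine ⟨(v.1/3, (v.2.1+2)/3, (v.2.2+1)/3), ?_, rfl⟩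
        exact (hEmem _).2 ⟨v, hv, (0,2,1), by simp, by norm_num⟩
      · refine ⟨(v.1/3, v.2.1/3, (v.2.2+2)/3), ?_, rfl⟩
        exact (hEmem _).2 ⟨v, hv, (0,0,2), by simp, by norm_num⟩
  have claim1 : (fun p : ℝ × ℝ × ℝ => p.2.2) '' E₄ = Icc (0:ℝ) 1 := by
    refine attractor_unique3 (fun x => x/3) (fun x => (x+1)/3) (fun x => (x+2)/3)
      (fun x y => dist1_le (by ring)) (fun x y => dist1_le (by ring))
      (fun x y => dist1_le (by ring)) (hEne.image _) (hEc.image (by fun_prop))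
      ⟨0, by norm_num⟩ isCompact_Icc hPeq Icc_third
  have hzb : ∀ v ∈ E₄, 0 ≤ v.2.2 ∧ v.2.2 ≤ 1 := by
    intro v hv
    have : v.2.2 ∈ Icc (0:ℝ) 1 := claim1 ▸ ⟨v, hv, rfl⟩
    exact this
  -- sections as images
  have hsec : ∀ c : ℝ, {p : ℝ × ℝ | (p.1, p.2, c) ∈ E₄}
      = (fun v : ℝ × ℝ × ℝ => (v.1, v.2.1)) '' (E₄ ∩ (univ ×ˢ univ ×ˢ {c})) := by
    intro c; ext ⟨a, b⟩
    simp only [mem_setOf_eq, mem_image, mem_inter_iff, mem_prod, mem_univ, true_and,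
      mem_singleton_iff]
    constructor
    · intro h; exact ⟨(a, b, c), ⟨h, rfl⟩, rfl⟩
    · rintro ⟨v, ⟨hv, hc⟩, h⟩
      rw [Prod.mk.injEq] at h
      have hv' : (v.1, v.2.1, v.2.2) ∈ E₄ := hv
      rw [h.1, h.2, hc] at hv'
      exact hv'
  have hsecc : ∀ c : ℝ, IsCompact {p : ℝ × ℝ | (p.1, p.2, c) ∈ E₄} := by
    intro c; rw [hsec c]
    exact ((hEc.inter_right (isClosed_univ.prod (isClosed_univ.prod
      isClosed_singleton))).image (by fun_prop))
  have hsecne : ∀ c : ℝ, c ∈ Icc (0:ℝ) 1 → {p : ℝ × ℝ | (p.1, p.2, c) ∈ E₄}.Nonempty := by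
    intro c hc
    have h1 : c ∈ (fun p : ℝ × ℝ × ℝ => p.2.2) '' E₄ := by rw [claim1]; exact hc
    obtain ⟨v, hv, hz⟩ := h1
    refine ⟨(v.1, v.2.1), ?_⟩
    show (v.1, v.2.1, c) ∈ E₄
    have hz' : v.2.2 = c := hz
    have hv' : (v.1, v.2.1, v.2.2) ∈ E₄ := hv
    rwa [hz'] at hv'
  -- Claim 2
  have hS1eq : {p : ℝ × ℝ | (p.1, p.2, (1:ℝ)) ∈ E₄}
      = (fun p : ℝ × ℝ => (p.1/3, p.2/3)) '' {p : ℝ × ℝ | (p.1, p.2, (1:ℝ)) ∈ E₄}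
      ∪ (fun p : ℝ × ℝ => ((p.1+1)/3, p.2/3)) '' {p : ℝ × ℝ | (p.1, p.2, (1:ℝ)) ∈ E₄}
      ∪ (fun p : ℝ × ℝ => ((p.1+2)/3, p.2/3)) '' {p : ℝ × ℝ | (p.1, p.2, (1:ℝ)) ∈ E₄} := by
    ext ⟨a, b⟩
    simp only [mem_union, mem_image, mem_setOf_eq, Prod.exists, Prod.mk.injEq]
    constructor
    · intro h
      obtain ⟨p, hp, d, hd, h1, h2, h3⟩ := (hEmem _).1 h
      have hz := hzb p hp
      have hpe : (p.1, p.2.1, p.2.2) ∈ E₄ := hp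
      simp only [mem_insert_iff, mem_singleton_iff] at hd
      rcases hd with rfl|rfl|rfl|rfl|rfl|rfl|rfl|rfl|rfl|rfl <;> norm_num at h1 h2 h3 <;>
        first
        | (exfalso; linarith [hz.1, hz.2])
        | exact Or.inl (Or.inl ⟨p.1, p.2.1,
            by have hh : p.2.2 = 1 := by linarith
               rwa [hh] at hpe,
            by linarith, by linarith⟩)
        | exact Or.inl (Or.inr ⟨p.1, p.2.1,
            by have hh : p.2.2 = 1 := by linarith
               rwa [hh] at hpe,
            by linarith, by linarith⟩)
        | exact Or.inr ⟨p.1, p.2.1,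
            by have hh : p.2.2 = 1 := by linarith
               rwa [hh] at hpe,
            by linarith, by linarith⟩
    · rintro ((⟨x, y, hxy, h1, h2⟩ | ⟨x, y, hxy, h1, h2⟩) | ⟨x, y, hxy, h1, h2⟩)
      · exact (hEmem _).2 ⟨(x, y, 1), hxy, (0, 0, 2), by simp,
          by refine ⟨?_, ?_, ?_⟩ <;> simp <;> linarith⟩
      · exact (hEmem _).2 ⟨(x, y, 1), hxy, (1, 0, 2), by simp,
          by refine ⟨?_, ?_, ?_⟩ <;> simp <;> linarith⟩
      · exact (hEmem _).2 ⟨(x, y, 1), hxy, (2, 0, 2), by simp,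
          by refine ⟨?_, ?_, ?_⟩ <;> simp <;> linarith⟩
  have hT1eq : Icc (0:ℝ) 1 ×ˢ ({0} : Set ℝ)
      = (fun p : ℝ × ℝ => (p.1/3, p.2/3)) '' (Icc (0:ℝ) 1 ×ˢ ({0} : Set ℝ))
      ∪ (fun p : ℝ × ℝ => ((p.1+1)/3, p.2/3)) '' (Icc (0:ℝ) 1 ×ˢ ({0} : Set ℝ))
      ∪ (fun p : ℝ × ℝ => ((p.1+2)/3, p.2/3)) '' (Icc (0:ℝ) 1 ×ˢ ({0} : Set ℝ)) := by
    ext ⟨a, b⟩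
    simp only [mem_union, mem_image, mem_prod, mem_Icc, mem_singleton_iff, Prod.exists,
      Prod.mk.injEq]
    constructor
    · rintro ⟨⟨h0a, h1a⟩, rfl⟩
      rcases le_or_gt a (1/3) with h | h
      · exact Or.inl (Or.inl ⟨3*a, 0, ⟨⟨by linarith, by linarith⟩, rfl⟩, by ring, by norm_num⟩)
      rcases le_or_gt a (2/3) with h' | h'
      · exact Or.inl (Or.inr ⟨3*a-1, 0, ⟨⟨by linarith, by linarith⟩, rfl⟩, by ring, by norm_num⟩)
      · exact Or.inr ⟨3*a-2, 0, ⟨⟨by linarith, by linarith⟩, rfl⟩, by ring, by norm_num⟩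
    · rintro ((⟨x, y, ⟨⟨h0, h1⟩, rfl⟩, rfl, rfl⟩ | ⟨x, y, ⟨⟨h0, h1⟩, rfl⟩, rfl, rfl⟩)
        | ⟨x, y, ⟨⟨h0, h1⟩, rfl⟩, rfl, rfl⟩) <;>
        exact ⟨⟨by linarith, by linarith⟩, by norm_num⟩
  have claim2' : {p : ℝ × ℝ | (p.1, p.2, (1:ℝ)) ∈ E₄} = Icc (0:ℝ) 1 ×ˢ ({0} : Set ℝ) := by
    refine attractor_unique3 (fun p : ℝ × ℝ => (p.1/3, p.2/3))
      (fun p : ℝ × ℝ => ((p.1+1)/3, p.2/3)) (fun p : ℝ × ℝ => ((p.1+2)/3, p.2/3))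
      (fun x y => dist2_le (by ring) (by ring)) (fun x y => dist2_le (by ring) (by ring))
      (fun x y => dist2_le (by ring) (by ring))
      (hsecne 1 (by norm_num)) (hsecc 1)
      ⟨(0, 0), by simp⟩ (isCompact_Icc.prod isCompact_singleton) hS1eq hT1eq
  have claim2 : E₄ ∩ (univ ×ˢ univ ×ˢ ({1} : Set ℝ))
      = Icc (0:ℝ) 1 ×ˢ ({0} : Set ℝ) ×ˢ ({1} : Set ℝ) := by
    ext ⟨x, y, z⟩
    simp only [mem_inter_iff, mem_prod, mem_univ, true_and, mem_singleton_iff]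
    constructor
    · rintro ⟨hv, rfl⟩
      have h : (x, y) ∈ {p : ℝ × ℝ | (p.1, p.2, (1:ℝ)) ∈ E₄} := hv
      rw [claim2'] at h
      exact ⟨h.1, h.2, rfl⟩
    · rintro ⟨hx, hy, rfl⟩
      have h : (x, y) ∈ Icc (0:ℝ) 1 ×ˢ ({0} : Set ℝ) := ⟨hx, hy⟩
      rw [← claim2'] at h
      exact ⟨h, rfl⟩
  -- Claim 3
  have hS0eq : {p : ℝ × ℝ | (p.1, p.2, (0:ℝ)) ∈ E₄}
      = (fun p : ℝ × ℝ => (p.1/3, p.2/3)) '' {p : ℝ × ℝ | (p.1, p.2, (0:ℝ)) ∈ E₄}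
      ∪ (fun p : ℝ × ℝ => (p.1/3, (p.2+1)/3)) '' {p : ℝ × ℝ | (p.1, p.2, (0:ℝ)) ∈ E₄}
      ∪ (fun p : ℝ × ℝ => (p.1/3, (p.2+2)/3)) '' {p : ℝ × ℝ | (p.1, p.2, (0:ℝ)) ∈ E₄}
      ∪ (fun p : ℝ × ℝ => ((p.1+2)/3, p.2/3)) '' {p : ℝ × ℝ | (p.1, p.2, (0:ℝ)) ∈ E₄}
      ∪ (fun p : ℝ × ℝ => ((p.1+2)/3, (p.2+1)/3)) '' {p : ℝ × ℝ | (p.1, p.2, (0:ℝ)) ∈ E₄}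
      ∪ (fun p : ℝ × ℝ => ((p.1+2)/3, (p.2+2)/3)) '' {p : ℝ × ℝ | (p.1, p.2, (0:ℝ)) ∈ E₄} := by
    ext ⟨a, b⟩
    simp only [mem_union, mem_image, mem_setOf_eq, Prod.exists, Prod.mk.injEq]
    constructor
    · intro h
      obtain ⟨p, hp, d, hd, h1, h2, h3⟩ := (hEmem _).1 h
      have hz := hzb p hp
      have hpe : (p.1, p.2.1, p.2.2) ∈ E₄ := hp
      simp only [mem_insert_iff, mem_singleton_iff] at hd
      rcases hd with rfl|rfl|rfl|rfl|rfl|rfl|rfl|rfl|rfl|rfl <;> norm_num at h1 h2 h3 <;>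
        first
        | (exfalso; linarith [hz.1, hz.2])
        | exact Or.inl (Or.inl (Or.inl (Or.inl (Or.inl ⟨p.1, p.2.1,
            by have hh : p.2.2 = 0 := by linarith
               rwa [hh] at hpe,
            by linarith, by linarith⟩))))
        | exact Or.inl (Or.inl (Or.inl (Or.inl (Or.inr ⟨p.1, p.2.1,
            by have hh : p.2.2 = 0 := by linarith
               rwa [hh] at hpe,
            by linarith, by linarith⟩))))
        | exact Or.inl (Or.inl (Or.inl (Or.inr ⟨p.1, p.2.1,
            by have hh : p.2.2 = 0 := by linarith
               rwa [hh] at hpe,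
            by linarith, by linarith⟩)))
        | exact Or.inl (Or.inl (Or.inr ⟨p.1, p.2.1,
            by have hh : p.2.2 = 0 := by linarith
               rwa [hh] at hpe,
            by linarith, by linarith⟩))
        | exact Or.inl (Or.inr ⟨p.1, p.2.1,
            by have hh : p.2.2 = 0 := by linarith
               rwa [hh] at hpe,
            by linarith, by linarith⟩)
        | exact Or.inr ⟨p.1, p.2.1,
            by have hh : p.2.2 = 0 := by linarith
               rwa [hh] at hpe,
            by linarith, by linarith⟩
    · rintro (((((⟨x, y, hxy, h1, h2⟩ | ⟨x, y, hxy, h1, h2⟩) | ⟨x, y, hxy, h1, h2⟩)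
        | ⟨x, y, hxy, h1, h2⟩) | ⟨x, y, hxy, h1, h2⟩) | ⟨x, y, hxy, h1, h2⟩)
      · exact (hEmem _).2 ⟨(x, y, 0), hxy, (0, 0, 0), by simp,
          by refine ⟨?_, ?_, ?_⟩ <;> simp <;> linarith⟩
      · exact (hEmem _).2 ⟨(x, y, 0), hxy, (0, 1, 0), by simp,
          by refine ⟨?_, ?_, ?_⟩ <;> simp <;> linarith⟩
      · exact (hEmem _).2 ⟨(x, y, 0), hxy, (0, 2, 0), by simp,
          by refine ⟨?_, ?_, ?_⟩ <;> simp <;> linarith⟩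
      · exact (hEmem _).2 ⟨(x, y, 0), hxy, (2, 0, 0), by simp,
          by refine ⟨?_, ?_, ?_⟩ <;> simp <;> linarith⟩
      · exact (hEmem _).2 ⟨(x, y, 0), hxy, (2, 1, 0), by simp,
          by refine ⟨?_, ?_, ?_⟩ <;> simp <;> linarith⟩
      · exact (hEmem _).2 ⟨(x, y, 0), hxy, (2, 2, 0), by simp,
          by refine ⟨?_, ?_, ?_⟩ <;> simp <;> linarith⟩
  have hT0eq : K ×ˢ Icc (0:ℝ) 1
      = (fun p : ℝ × ℝ => (p.1/3, p.2/3)) '' (K ×ˢ Icc (0:ℝ) 1)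
      ∪ (fun p : ℝ × ℝ => (p.1/3, (p.2+1)/3)) '' (K ×ˢ Icc (0:ℝ) 1)
      ∪ (fun p : ℝ × ℝ => (p.1/3, (p.2+2)/3)) '' (K ×ˢ Icc (0:ℝ) 1)
      ∪ (fun p : ℝ × ℝ => ((p.1+2)/3, p.2/3)) '' (K ×ˢ Icc (0:ℝ) 1)
      ∪ (fun p : ℝ × ℝ => ((p.1+2)/3, (p.2+1)/3)) '' (K ×ˢ Icc (0:ℝ) 1)
      ∪ (fun p : ℝ × ℝ => ((p.1+2)/3, (p.2+2)/3)) '' (K ×ˢ Icc (0:ℝ) 1) := by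
    ext ⟨a, b⟩
    simp only [mem_union, mem_image, mem_prod, mem_Icc, Prod.exists, Prod.mk.injEq]
    constructor
    · rintro ⟨ha, hb0, hb1⟩
      have haK : a ∈ (fun x : ℝ => x / 3) '' K ∪ (fun x : ℝ => (x + 2) / 3) '' K := by
        rw [← hK]; exact ha
      rcases haK with ⟨x, hx, rfl⟩ | ⟨x, hx, rfl⟩ <;>
      [rcases le_or_gt b (1/3) with h | h; rcases le_or_gt b (1/3) with h | h] <;>
      [skip; rcases le_or_gt b (2/3) with h' | h'; skip; rcases le_or_gt b (2/3) with h' | h']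
      · exact Or.inl (Or.inl (Or.inl (Or.inl (Or.inl
          ⟨x, 3*b, ⟨hx, by constructor <;> linarith⟩, rfl, by ring⟩))))
      · exact Or.inl (Or.inl (Or.inl (Or.inl (Or.inr
          ⟨x, 3*b-1, ⟨hx, by constructor <;> linarith⟩, rfl, by ring⟩))))
      · exact Or.inl (Or.inl (Or.inl (Or.inr
          ⟨x, 3*b-2, ⟨hx, by constructor <;> linarith⟩, rfl, by ring⟩)))
      · exact Or.inl (Or.inl (Or.inr
          ⟨x, 3*b, ⟨hx, by constructor <;> linarith⟩, rfl, by ring⟩))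
      · exact Or.inl (Or.inr
          ⟨x, 3*b-1, ⟨hx, by constructor <;> linarith⟩, rfl, by ring⟩)
      · exact Or.inr ⟨x, 3*b-2, ⟨hx, by constructor <;> linarith⟩, rfl, by ring⟩
    · have hsub : ∀ x : ℝ, x ∈ K → x / 3 ∈ K := by
        intro x hx
        rw [hK]; exact Or.inl ⟨x, hx, rfl⟩
      have hsub2 : ∀ x : ℝ, x ∈ K → (x + 2) / 3 ∈ K := by
        intro x hx
        rw [hK]; exact Or.inr ⟨x, hx, rfl⟩
      rintro (((((⟨x, y, ⟨hx, h0, h1⟩, rfl, rfl⟩ | ⟨x, y, ⟨hx, h0, h1⟩, rfl, rfl⟩)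
        | ⟨x, y, ⟨hx, h0, h1⟩, rfl, rfl⟩) | ⟨x, y, ⟨hx, h0, h1⟩, rfl, rfl⟩)
        | ⟨x, y, ⟨hx, h0, h1⟩, rfl, rfl⟩) | ⟨x, y, ⟨hx, h0, h1⟩, rfl, rfl⟩) <;>
        refine ⟨by first | exact hsub x hx | exact hsub2 x hx, by constructor <;> linarith⟩
  have claim3' : {p : ℝ × ℝ | (p.1, p.2, (0:ℝ)) ∈ E₄} = K ×ˢ Icc (0:ℝ) 1 := by
    refine attractor_unique6 (fun p : ℝ × ℝ => (p.1/3, p.2/3))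
      (fun p : ℝ × ℝ => (p.1/3, (p.2+1)/3)) (fun p : ℝ × ℝ => (p.1/3, (p.2+2)/3))
      (fun p : ℝ × ℝ => ((p.1+2)/3, p.2/3)) (fun p : ℝ × ℝ => ((p.1+2)/3, (p.2+1)/3))
      (fun p : ℝ × ℝ => ((p.1+2)/3, (p.2+2)/3))
      (fun x y => dist2_le (by ring) (by ring)) (fun x y => dist2_le (by ring) (by ring))
      (fun x y => dist2_le (by ring) (by ring)) (fun x y => dist2_le (by ring) (by ring))
      (fun x y => dist2_le (by ring) (by ring)) (fun x y => dist2_le (by ring) (by ring))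
      (hsecne 0 (by norm_num)) (hsecc 0)
      (hKne.prod (nonempty_Icc.2 zero_le_one)) (hKc.prod isCompact_Icc) hS0eq hT0eq
  have claim3 : E₄ ∩ (univ ×ˢ univ ×ˢ ({0} : Set ℝ))
      = K ×ˢ Icc (0:ℝ) 1 ×ˢ ({0} : Set ℝ) := by
    ext ⟨x, y, z⟩
    simp only [mem_inter_iff, mem_prod, mem_univ, true_and, mem_singleton_iff]
    constructor
    · rintro ⟨hv, rfl⟩
      have h : (x, y) ∈ {p : ℝ × ℝ | (p.1, p.2, (0:ℝ)) ∈ E₄} := hv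
      rw [claim3'] at h
      exact ⟨h.1, h.2, rfl⟩
    · rintro ⟨hx, hy, rfl⟩
      have h : (x, y) ∈ K ×ˢ Icc (0:ℝ) 1 := ⟨hx, hy⟩
      rw [← claim3'] at h
      exact ⟨h, rfl⟩
  exact ⟨claim1, claim2, claim3⟩
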